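/- Let B ≥ 2 be an integer and let 𝔸, 𝔹 be the Neumann matching matrices of size B×B. For any positive reals L_1,…,L_B, with 𝕃 = diag(L_1,…,L_B), one has det(𝔸·𝕃 − 𝔹) = −(∏_{b=1}^B L_b)·(∑_{b=1}^B L_b^{−1}). -/
import Mathlib


open Matrix BigOperators

/-- The Neumann matching matrix `𝔸` of size `B×B`: rows `0,…,B−2` (0-indexed) have a `1` on
the diagonal and a `−1` on the superdiagonal; the last row is zero. -/
def neumannA (B : ℕ) : Matrix (Fin B) (Fin B) ℝ :=
  Matrix.of fun i j =>
    if (i : ℕ) + 1 < B then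
      (if j = i then 1 else if (j : ℕ) = (i : ℕ) + 1 then -1 else 0)
    else 0

/-- The Neumann matching matrix `𝔹` of size `B×B`: every entry of the last row is `1`,
all other entries are `0`. -/
def neumannB (B : ℕ) : Matrix (Fin B) (Fin B) ℝ :=
  Matrix.of fun i _ => if (i : ℕ) + 1 = B then 1 else 0

lemma neumann_entry (B : ℕ) (L : Fin B → ℝ) (i j : Fin B) :
    (neumannA B * Matrix.diagonal L - neumannB B) i j =
      if (i : ℕ) + 1 = B then -1
      else if j = i then L j else if (j : ℕ) = (i : ℕ) + 1 then -(L j) else 0 := by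
  have hi := i.isLt
  simp only [Matrix.sub_apply, Matrix.mul_diagonal, neumannA, neumannB, Matrix.of_apply]
  by_cases h : (i : ℕ) + 1 = B
  · simp [h, show ¬ ((i:ℕ)+1 < B) from by omega]
  · have h' : (i : ℕ) + 1 < B := by omega
    simp only [h', if_true, h, if_false, sub_zero]
    by_cases hji : j = i
    · simp [hji]
    · simp only [hji, if_false]
      by_cases hj2 : (j : ℕ) = (i : ℕ) + 1 <;> simp [hj2]

lemma neumann_aux : ∀ n (L : Fin (n+2) → ℝ), (∀ b, L b ≠ 0) →
    (neumannA (n+2) * Matrix.diagonal L - neumannB (n+2)).det =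
      -(∏ b, L b) * (∑ b, (L b)⁻¹) := by
  intro n
  induction n with
  | zero =>
    intro L hL
    have h0 := hL 0
    have h1 := hL 1
    rw [Matrix.det_fin_two]
    rw [neumann_entry, neumann_entry, neumann_entry, neumann_entry]
    rw [Fin.prod_univ_two, Fin.sum_univ_two]
    norm_num
    field_simp
    ring
  | succ n ih =>
    intro L hL
    rw [Matrix.det_succ_column_zero]
    rw [Fin.sum_univ_succ, Fin.sum_univ_castSucc]
    have hmid : ∀ i : Fin (n+1),
        (-1 : ℝ) ^ ((i.castSucc.succ : Fin (n+3)) : ℕ) *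
          (neumannA (n+3) * Matrix.diagonal L - neumannB (n+3)) i.castSucc.succ 0 *
          ((neumannA (n+3) * Matrix.diagonal L - neumannB (n+3)).submatrix
            i.castSucc.succ.succAbove Fin.succ).det = 0 := by
      intro i
      have hi := i.isLt
      have hccs : ((i.castSucc.succ : Fin (n+3)) : ℕ) = (i : ℕ) + 1 := by simp
      have : (neumannA (n+3) * Matrix.diagonal L - neumannB (n+3)) i.castSucc.succ 0 = 0 := by
        rw [neumann_entry]
        simp only [hccs, Fin.ext_iff, Fin.val_succ, Fin.coe_castSucc, Fin.val_zero]
        split_ifs <;> first | rfl | omega | exact (‹False›).elim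
      rw [this]; ring
    rw [Finset.sum_congr rfl (fun i _ => hmid i), Finset.sum_const_zero]
    -- first term: i = 0
    have hfirst : ((neumannA (n+3) * Matrix.diagonal L - neumannB (n+3)).submatrix
        (Fin.succAbove 0) Fin.succ) =
        neumannA (n+2) * Matrix.diagonal (L ∘ Fin.succ) - neumannB (n+2) := by
      ext a b
      rw [Matrix.submatrix_apply, Fin.succAbove_zero, neumann_entry, neumann_entry]
      simp only [Fin.ext_iff, Fin.val_succ, Function.comp_apply]
      split_ifs <;> first | rfl | omega | exact (‹False›).elim
    -- last term: i = last
    have hlast : ((neumannA (n+3) * Matrix.diagonal L - neumannB (n+3)).submatrix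
        (Fin.succAbove (Fin.last (n+1)).succ) Fin.succ).det =
        ∏ a : Fin (n+2), (-(L a.succ)) := by
      have hsa : (Fin.last (n+1)).succ.succAbove = (Fin.castSucc : Fin (n+2) → Fin (n+3)) := by
        have h : (Fin.last (n+1)).succ = Fin.last (n+2) := by ext; simp
        rw [h]
        funext x
        exact Fin.succAbove_last_apply x
      rw [hsa]
      rw [Matrix.det_of_lowerTriangular]
      · apply Finset.prod_congr rfl
        intro a _
        have ha := a.isLt
        rw [Matrix.submatrix_apply, neumann_entry]
        simp only [Fin.ext_iff, Fin.val_succ, Fin.coe_castSucc]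
        split_ifs <;> first | rfl | omega | exact (‹False›).elim
      · intro a b hab
        have hab' : (a : ℕ) < b := hab
        have ha := a.isLt
        rw [Matrix.submatrix_apply, neumann_entry]
        simp only [Fin.ext_iff, Fin.val_succ, Fin.coe_castSucc]
        split_ifs <;> first | rfl | omega | exact (‹False›).elim
    rw [hfirst, hlast]
    rw [ih (L ∘ Fin.succ) (fun b => hL b.succ)]
    have hentry0 : (neumannA (n+3) * Matrix.diagonal L - neumannB (n+3)) 0 0 = L 0 := by
      rw [neumann_entry]
      simp only [Fin.ext_iff, Fin.val_zero]
      split_ifs <;> first | rfl | omega | exact (‹False›).elim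
    have hentrylast : (neumannA (n+3) * Matrix.diagonal L - neumannB (n+3))
        (Fin.last (n+1)).succ 0 = -1 := by
      rw [neumann_entry]
      rw [if_pos (by simp)]
    rw [hentry0, hentrylast]
    rw [Fin.prod_univ_succ (f := L), Fin.sum_univ_succ (f := fun b => (L b)⁻¹)]
    have hprodneg : (∏ a : Fin (n+2), (-(L a.succ))) =
        (-1:ℝ)^(n+2) * ∏ a : Fin (n+2), L a.succ := by
      rw [Finset.prod_congr rfl (fun a _ => (neg_one_mul (L a.succ)).symm),
        Finset.prod_mul_distrib, Finset.prod_const, Finset.card_univ, Fintype.card_fin]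
    rw [hprodneg]
    have hval : (((Fin.last (n+1)).succ : Fin (n+3)) : ℕ) = n + 2 := by simp
    rw [hval]
    have key : ∀ P : ℝ, (-1:ℝ)^(n+2) * (-1) * ((-1:ℝ)^(n+2) * P) = -P := by
      intro P
      have hsq : ((-1:ℝ))^(n+2) * ((-1:ℝ))^(n+2) = 1 := by
        rw [← pow_add]; exact Even.neg_one_pow ⟨n+2, by ring⟩
      linear_combination (-P) * hsq
    rw [key]
    have hL0 : L 0 ≠ 0 := hL 0
    simp only [Function.comp_apply, Fin.val_zero, pow_zero]
    field_simp
    ring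

theorem neumann_det_AL_sub_B (B : ℕ) (hB : 2 ≤ B) (L : Fin B → ℝ) (hL : ∀ b, 0 < L b) :
    (neumannA B * Matrix.diagonal L - neumannB B).det =
      -(∏ b : Fin B, L b) * (∑ b : Fin B, (L b)⁻¹) := by
  obtain ⟨n, rfl⟩ : ∃ n, B = n + 2 := ⟨B - 2, by omega⟩
  exact neumann_aux n L (fun b => (hL b).ne')
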